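/- Let V and W be finite-dimensional real vector spaces with a state cone C_W ⊆ W (closed, pointed, full-dimensional convex cone) with unit functional u_W ∈ W* (positive on nonzero cone elements), and an effect cone C_V ⊆ V* (closed, pointed, full-dimensional convex cone) with discarding effect u_V lying in the topological interior of C_V. Let μ be a normalized state lying in the topological interior of C_W, i.e., μ ∈ interior(C_W) and u_W(μ) = 1. Then the linear map φ_0 : V → W defined by φ_0(x) = u_V(x)·μ belongs to DP ∩ core(K), where DP is the set of discard-preserving linear maps and K is the cone of finite sums of rank-one maps x ↦ e(x)s with s a normalized state and e in the effect cone. -/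

import Mathlib

lemma mem_setK_of_fintype
    {V W : Type*}
    [NormedAddCommGroup V] [NormedSpace ℝ V]
    [NormedAddCommGroup W] [NormedSpace ℝ W]
    (CW : ConvexCone ℝ W) (uW : W →ₗ[ℝ] ℝ)
    (CV : ConvexCone ℝ (V →L[ℝ] ℝ))
    {ι : Type} [Fintype ι] (s : ι → W) (e : ι → (V →L[ℝ] ℝ)) (φ : V →ₗ[ℝ] W)
    (hs : ∀ i, s i ∈ CW ∧ uW (s i) = 1) (he : ∀ i, e i ∈ CV)
    (hφ : ∀ x, φ x = ∑ i, e i x • s i) :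
    φ ∈ {φ : V →ₗ[ℝ] W |
        ∃ (k : ℕ) (s : Fin k → W) (e : Fin k → (V →L[ℝ] ℝ)),
          (∀ i, s i ∈ CW ∧ uW (s i) = 1) ∧
          (∀ i, e i ∈ CV) ∧
          (∀ x, φ x = ∑ i, e i x • s i)} := by
  classical
  refine ⟨Fintype.card ι, s ∘ (Fintype.equivFin ι).symm, e ∘ (Fintype.equivFin ι).symm,
    fun i => hs _, fun i => he _, fun x => ?_⟩
  rw [hφ x]
  exact (Equiv.sum_comp (Fintype.equivFin ι).symm (fun i => e i x • s i)).symm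


set_option maxHeartbeats 1000000 in
/-- Lemma 3 of the paper: for a normalized state `μ` interior to the state
cone, the linear map `φ₀ : x ↦ u_V(x) • μ` belongs to `DP ∩ core(K)`, where `DP` is the set
of discard-preserving linear maps and `K` is the cone of finite sums of rank-one maps
`x ↦ e(x) • s` with `s` a normalized state and `e` in the effect cone. -/
theorem discardPrepare_mem_dp_inter_core
    {V W : Type*}
    [NormedAddCommGroup V] [NormedSpace ℝ V] [FiniteDimensional ℝ V]
    [NormedAddCommGroup W] [NormedSpace ℝ W] [FiniteDimensional ℝ W]
    -- the state cone `C_W ⊆ W`: closed, pointed, full-dimensional convex cone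
    (CW : ConvexCone ℝ W) (hCWclosed : IsClosed (CW : Set W))
    (hCWpointed : ∀ x ∈ CW, -x ∈ CW → x = 0)
    (hCWfull : Submodule.span ℝ (CW : Set W) = ⊤)
    -- the unit functional `u_W`, strictly positive on nonzero cone elements
    (uW : W →ₗ[ℝ] ℝ) (huW : ∀ s ∈ CW, s ≠ 0 → 0 < uW s)
    -- the effect cone `C_V ⊆ V*`: closed, pointed, full-dimensional convex cone
    (CV : ConvexCone ℝ (V →L[ℝ] ℝ)) (hCVclosed : IsClosed (CV : Set (V →L[ℝ] ℝ)))
    (hCVpointed : ∀ e ∈ CV, -e ∈ CV → e = 0)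
    (hCVfull : Submodule.span ℝ (CV : Set (V →L[ℝ] ℝ)) = ⊤)
    -- the discarding effect `u_V`, interior to the effect cone
    (uV : V →L[ℝ] ℝ) (huV : uV ∈ interior (CV : Set (V →L[ℝ] ℝ)))
    -- a normalized state `μ` interior to the state cone
    (μ : W) (hμ : μ ∈ interior (CW : Set W)) (hμ1 : uW μ = 1)
    -- the cone `K` of finite sums of rank-one maps
    (K : Set (V →ₗ[ℝ] W))
    (hK : K = {φ : V →ₗ[ℝ] W |
        ∃ (k : ℕ) (s : Fin k → W) (e : Fin k → (V →L[ℝ] ℝ)),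
          (∀ i, s i ∈ CW ∧ uW (s i) = 1) ∧
          (∀ i, e i ∈ CV) ∧
          (∀ x, φ x = ∑ i, e i x • s i)})
    -- the map `φ₀ : x ↦ u_V(x) • μ`
    (φ0 : V →ₗ[ℝ] W) (hφ0 : ∀ x, φ0 x = uV x • μ) :
    φ0 ∈ {φ : V →ₗ[ℝ] W | ∀ x, uW (φ x) = uV x} ∩
      {φ ∈ K | ∀ ψ : V →ₗ[ℝ] W, ∃ tψ > (0 : ℝ),
        ∀ t ∈ Set.Icc (0 : ℝ) tψ, φ + t • ψ ∈ K} := by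
  classical
  have huVmem : uV ∈ CV := interior_subset huV
  have hμmem : μ ∈ CW := interior_subset hμ
  -- 0 is in the effect cone
  have h0CV : (0 : V →L[ℝ] ℝ) ∈ CV := by
    have ht : Filter.Tendsto (fun k : ℕ => (1 / ((k : ℝ) + 1)) • uV)
        Filter.atTop (nhds 0) := by
      simpa using (tendsto_one_div_add_atTop_nhds_zero_nat (𝕜 := ℝ)).smul_const uV
    exact hCVclosed.mem_of_tendsto ht
      (Filter.Eventually.of_forall fun k => CV.smul_mem (by positivity) huVmem)
  have hsmulCV : ∀ (r : ℝ), 0 ≤ r → ∀ g ∈ CV, r • g ∈ CV := by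
    intro r hr g hg
    rcases hr.lt_or_eq with h | h
    · exact CV.smul_mem h hg
    · rw [← h, zero_smul]; exact h0CV
  -- membership of φ0 in K
  have hφ0K : φ0 ∈ K := by
    rw [hK]
    exact mem_setK_of_fintype CW uW CV (fun _ : Unit => μ) (fun _ => uV) φ0
      (fun _ => ⟨hμmem, hμ1⟩) (fun _ => huVmem) (fun x => by simp [hφ0 x])
  refine ⟨fun x => by rw [hφ0, map_smul, hμ1, smul_eq_mul, mul_one], hφ0K, ?_⟩
  intro ψ
  -- radii of interior balls
  obtain ⟨ε, hε, hballV⟩ :=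
    Metric.mem_nhds_iff.mp (mem_interior_iff_mem_nhds.mp huV)
  obtain ⟨δ, hδ, hballW⟩ :=
    Metric.mem_nhds_iff.mp (mem_interior_iff_mem_nhds.mp hμ)
  set n := Module.finrank ℝ V with hn
  let b : Module.Basis (Fin n) ℝ V := Module.finBasis ℝ V
  let f : Fin n → (V →L[ℝ] ℝ) := fun j => LinearMap.toContinuousLinearMap (b.coord j)
  let w : Fin n → W := fun j => ψ (b j)
  have hψx : ∀ x, ψ x = ∑ j, f j x • w j := by
    intro x
    conv_lhs => rw [← b.sum_repr x]
    rw [map_sum]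
    refine Finset.sum_congr rfl fun j _ => ?_
    rw [map_smul]
    simp [f, w, Module.Basis.coord_apply]
  let c : Fin n → ℝ := fun j => 2 * (‖f j‖ + 1) / ε
  let d : Fin n → ℝ := fun j => max (2 * (‖w j‖ + 1) / δ) (|uW (w j)| + 1)
  have hc : ∀ j, 0 < c j := fun j => by positivity
  have hd : ∀ j, 0 < d j := fun j => lt_max_of_lt_right (by positivity)
  -- effects
  have habs : ∀ g : V →L[ℝ] ℝ, (2 * (‖g‖ + 1) / ε) • uV + g ∈ CV := by
    intro g
    have hcg : (0 : ℝ) < 2 * (‖g‖ + 1) / ε := by positivity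
    have hmem : uV + (2 * (‖g‖ + 1) / ε)⁻¹ • g ∈ CV := by
      apply hballV
      rw [Metric.mem_ball, dist_eq_norm]
      have h' : uV + (2 * (‖g‖ + 1) / ε)⁻¹ • g - uV = (2 * (‖g‖ + 1) / ε)⁻¹ • g := by abel
      rw [h']
      have h2 := norm_smul ((2 * (‖g‖ + 1) / ε)⁻¹) g
      rw [Real.norm_eq_abs, abs_of_nonneg (le_of_lt (inv_pos.mpr hcg))] at h2
      rw [h2, inv_div, div_mul_eq_mul_div, div_lt_iff₀ (by positivity)]
      nlinarith [norm_nonneg g, hε]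
    have := CV.smul_mem hcg hmem
    rwa [smul_add, smul_smul, mul_inv_cancel₀ (ne_of_gt hcg), one_smul] at this
  have hep : ∀ j, c j • uV + f j ∈ CV := fun j => habs (f j)
  have hem : ∀ j, c j • uV - f j ∈ CV := by
    intro j
    have := habs (-(f j))
    rw [norm_neg] at this
    simpa [sub_eq_add_neg, c] using this
  -- states
  have hstate : ∀ j (v : W), ‖v‖ = ‖w j‖ → d j • μ + v ∈ CW := by
    intro j v hv
    have hdj := hd j
    have hmem : μ + (d j)⁻¹ • v ∈ CW := by
      apply hballW
      rw [Metric.mem_ball, dist_eq_norm]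
      have h' : μ + (d j)⁻¹ • v - μ = (d j)⁻¹ • v := by abel
      rw [h', norm_smul, Real.norm_eq_abs, abs_of_nonneg (le_of_lt (inv_pos.mpr hdj)), hv,
        inv_mul_eq_div, div_lt_iff₀ hdj]
      have h1 : 2 * (‖w j‖ + 1) / δ ≤ d j := le_max_left _ _
      have h2 : 2 * (‖w j‖ + 1) ≤ δ * d j := by
        rw [div_le_iff₀ hδ] at h1; linarith [mul_comm δ (d j)]
      nlinarith [norm_nonneg (w j)]
    have := CW.smul_mem hdj hmem
    rwa [smul_add, smul_smul, mul_inv_cancel₀ (ne_of_gt hdj), one_smul] at this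
  have hsp : ∀ j, d j • μ + w j ∈ CW := fun j => hstate j (w j) rfl
  have hsm : ∀ j, d j • μ - w j ∈ CW := by
    intro j
    have := hstate j (-(w j)) (norm_neg _)
    simpa [sub_eq_add_neg] using this
  have hpp : ∀ j, 0 < d j + uW (w j) := by
    intro j
    have h1 : |uW (w j)| + 1 ≤ d j := le_max_right _ _
    have := neg_abs_le (uW (w j))
    linarith
  have hpm : ∀ j, 0 < d j - uW (w j) := by
    intro j
    have h1 : |uW (w j)| + 1 ≤ d j := le_max_right _ _
    have := le_abs_self (uW (w j))
    linarith
  have huWp : ∀ j, uW (d j • μ + w j) = d j + uW (w j) := by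
    intro j; rw [map_add, map_smul, hμ1, smul_eq_mul, mul_one]
  have huWm : ∀ j, uW (d j • μ - w j) = d j - uW (w j) := by
    intro j; rw [map_sub, map_smul, hμ1, smul_eq_mul, mul_one]
  set C : ℝ := ∑ j, c j * d j with hCdef
  have hC : 0 ≤ C :=
    Finset.sum_nonneg fun j _ => le_of_lt (mul_pos (hc j) (hd j))
  refine ⟨(2 * (C + 1))⁻¹, inv_pos.mpr (by linarith), ?_⟩
  rintro t ⟨ht0, ht1⟩
  have ha0 : 0 < 1 - t * C := by
    have hinv : (2 * (C + 1))⁻¹ * (2 * (C + 1)) = 1 := inv_mul_cancel₀ (ne_of_gt (by linarith))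
    have hinvpos : (0 : ℝ) < (2 * (C + 1))⁻¹ := inv_pos.mpr (by linarith)
    nlinarith [mul_le_mul_of_nonneg_right ht1 hC,
      mul_lt_mul_of_pos_left (show C < 2 * (C + 1) by linarith) hinvpos]
  rw [hK]
  -- the decomposition families
  let S : Option (Fin n × Bool) → W := fun i =>
    i.elim μ fun p =>
      cond p.2 ((d p.1 + uW (w p.1))⁻¹ • (d p.1 • μ + w p.1))
               ((d p.1 - uW (w p.1))⁻¹ • (d p.1 • μ - w p.1))
  let E : Option (Fin n × Bool) → (V →L[ℝ] ℝ) := fun i =>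
    i.elim ((1 - t * C) • uV) fun p =>
      cond p.2 (((t / 2) * (d p.1 + uW (w p.1))) • (c p.1 • uV + f p.1))
               (((t / 2) * (d p.1 - uW (w p.1))) • (c p.1 • uV - f p.1))
  have hSprop : ∀ i, S i ∈ CW ∧ uW (S i) = 1 := by
    rintro (_ | ⟨j, bb⟩)
    · exact ⟨hμmem, hμ1⟩
    cases bb
    · simp only [S, Option.elim, cond_false]
      refine ⟨CW.smul_mem (inv_pos.mpr (hpm j)) (hsm j), ?_⟩
      rw [map_smul, huWm, smul_eq_mul, inv_mul_cancel₀ (ne_of_gt (hpm j))]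
    · simp only [S, Option.elim, cond_true]
      refine ⟨CW.smul_mem (inv_pos.mpr (hpp j)) (hsp j), ?_⟩
      rw [map_smul, huWp, smul_eq_mul, inv_mul_cancel₀ (ne_of_gt (hpp j))]
  have hEprop : ∀ i, E i ∈ CV := by
    rintro (_ | ⟨j, bb⟩)
    · exact CV.smul_mem ha0 huVmem
    cases bb
    · exact hsmulCV _ (mul_nonneg (by linarith) (le_of_lt (hpm j))) _ (hem j)
    · exact hsmulCV _ (mul_nonneg (by linarith) (le_of_lt (hpp j))) _ (hep j)
  have key : ∀ (j : Fin n) (x : V),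
      E (some (j, true)) x • S (some (j, true)) + E (some (j, false)) x • S (some (j, false))
        = (t * (c j * d j) * uV x) • μ + (t * f j x) • w j := by
    intro j x
    simp only [S, E, Option.elim, cond_true, cond_false,
      ContinuousLinearMap.smul_apply, ContinuousLinearMap.add_apply,
      ContinuousLinearMap.sub_apply, ContinuousLinearMap.coe_smul',
      Pi.smul_apply, smul_eq_mul, smul_smul]
    have e1 : t / 2 * (d j + uW (w j)) * (c j * uV x + f j x) * (d j + uW (w j))⁻¹
        = t / 2 * (c j * uV x + f j x) := by
      rw [show t / 2 * (d j + uW (w j)) * (c j * uV x + f j x) * (d j + uW (w j))⁻¹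
          = t / 2 * (c j * uV x + f j x) * ((d j + uW (w j)) * (d j + uW (w j))⁻¹) from by
        ring, mul_inv_cancel₀ (ne_of_gt (hpp j)), mul_one]
    have e2 : t / 2 * (d j - uW (w j)) * (c j * uV x - f j x) * (d j - uW (w j))⁻¹
        = t / 2 * (c j * uV x - f j x) := by
      rw [show t / 2 * (d j - uW (w j)) * (c j * uV x - f j x) * (d j - uW (w j))⁻¹
          = t / 2 * (c j * uV x - f j x) * ((d j - uW (w j)) * (d j - uW (w j))⁻¹) from by
        ring, mul_inv_cancel₀ (ne_of_gt (hpm j)), mul_one]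
    rw [e1, e2]
    module
  refine mem_setK_of_fintype CW uW CV S E _ hSprop hEprop ?_
  intro x
  rw [Fintype.sum_option, Fintype.sum_prod_type]
  have hinner : ∀ j : Fin n,
      (∑ bb : Bool, E (some (j, bb)) x • S (some (j, bb)))
        = (t * (c j * d j) * uV x) • μ + (t * f j x) • w j := by
    intro j
    rw [Fintype.sum_bool]
    exact key j x
  rw [Finset.sum_congr rfl fun j _ => hinner j, Finset.sum_add_distrib]
  have h1 : (∑ j, (t * (c j * d j) * uV x) • μ) = (t * C * uV x) • μ := by
    rw [← Finset.sum_smul, hCdef]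
    congr 1
    rw [Finset.mul_sum, Finset.sum_mul]
  have h2 : (∑ j, (t * f j x) • w j) = t • ψ x := by
    rw [hψx x, Finset.smul_sum]
    exact Finset.sum_congr rfl fun j _ => by rw [smul_smul]
  rw [h1, h2]
  simp only [LinearMap.add_apply, LinearMap.smul_apply, hφ0, E, S, Option.elim,
    ContinuousLinearMap.coe_smul', Pi.smul_apply, smul_eq_mul]
  rw [← add_assoc, ← add_smul]
  congr 1
  ring
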